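/- For every real x with 0 < x ≤ 1, the sum of the series Σ_{m=1}^∞ x/(m(m+x)) equals Γ'(x)/Γ(x) + 1/x + γ, where Γ'(x)/Γ(x) is the logarithmic derivative of the real Gamma function at x (the digamma function ψ(x)) and γ is the Euler–Mascheroni constant. -/

import Mathlib

open Real Filter Topology Finset

namespace DigammaAux

/-- The Weierstrass series terms. -/
noncomputable def g (k : ℕ) (y : ℝ) : ℝ := y / (k + 1) - log (1 + y / (k + 1))

noncomputable def g' (k : ℕ) (y : ℝ) : ℝ := y / ((k + 1 : ℝ) * ((k + 1 : ℝ) + y))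

lemma key_identity (y : ℝ) (hy : 0 < y) (N : ℕ) (hN : 1 ≤ N) :
    ∑ k ∈ range N, g k y
      = y * ((harmonic N : ℝ) - log N) + log y + log (Real.GammaSeq y N) := by
  have hNpos : (0 : ℝ) < N := by exact_mod_cast hN
  have h1 : ∀ k : ℕ, (0:ℝ) < (k:ℝ) + 1 := fun k => by positivity
  have h2 : ∀ k : ℕ, (0:ℝ) < y + ((k:ℝ) + 1) := fun k => by positivity
  -- rewrite each log term
  have hterm : ∀ k : ℕ, g k y = y / (k + 1) - (log (y + (k + 1)) - log (k + 1)) := by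
    intro k
    rw [g, ← Real.log_div (h2 k).ne' (h1 k).ne']
    congr 2
    field_simp
    ring
  rw [Finset.sum_congr rfl fun k _ => hterm k]
  rw [Finset.sum_sub_distrib, Finset.sum_sub_distrib]
  have hfact : ∑ k ∈ range N, log ((k : ℝ) + 1) = log (N.factorial : ℝ) := by
    rw [← Real.log_prod (fun k _ => (h1 k).ne')]
    congr 1
    norm_cast
    exact Finset.prod_range_add_one_eq_factorial N
  have hGS : log (Real.GammaSeq y N)
      = y * log N + log (N.factorial : ℝ) - (log y + ∑ k ∈ range N, log (y + ((k:ℝ) + 1))) := by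
    rw [Real.GammaSeq]
    have hprod : ∏ j ∈ range (N + 1), (y + (j : ℝ)) =
        y * ∏ k ∈ range N, (y + ((k:ℝ) + 1)) := by
      rw [Finset.prod_range_succ']
      push_cast
      ring
    have hprodpos : (0:ℝ) < ∏ k ∈ range N, (y + ((k:ℝ) + 1)) :=
      Finset.prod_pos fun k _ => h2 k
    have hfactpos : (0:ℝ) < (N.factorial : ℝ) := by exact_mod_cast N.factorial_pos
    rw [hprod, Real.log_div (by positivity) (by positivity), Real.log_mul (by positivity)
      hfactpos.ne', Real.log_mul hy.ne' hprodpos.ne', Real.log_rpow hNpos,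
      Real.log_prod (fun k _ => (h2 k).ne')]
  have hharm : (harmonic N : ℝ) = ∑ k ∈ range N, (1:ℝ) / ((k:ℝ) + 1) := by
    rw [harmonic]
    push_cast
    simp [one_div]
  have hsum1 : ∑ k ∈ range N, y / ((k:ℝ) + 1) = y * (harmonic N : ℝ) := by
    rw [hharm, Finset.mul_sum]
    exact Finset.sum_congr rfl fun k _ => by ring
  rw [hsum1, hfact, hGS]
  ring

lemma hasSum_g (y : ℝ) (hy : 0 < y) :
    HasSum (fun k => g k y)
      (y * Real.eulerMascheroniConstant + log y + log (Real.Gamma y)) := by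
  rw [hasSum_iff_tendsto_nat_of_nonneg]
  · have h1 : Tendsto (fun N : ℕ =>
        y * ((harmonic N : ℝ) - log N) + log y + log (Real.GammaSeq y N)) atTop
        (𝓝 (y * Real.eulerMascheroniConstant + log y + log (Real.Gamma y))) := by
      refine Tendsto.add (Tendsto.add ?_ tendsto_const_nhds) ?_
      · exact (Real.tendsto_harmonic_sub_log.const_mul y)
      · exact ((Real.continuousAt_log (Real.Gamma_pos_of_pos hy).ne').tendsto).comp
          (Real.GammaSeq_tendsto_Gamma y)
    refine h1.congr' ?_
    filter_upwards [eventually_ge_atTop 1] with N hN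
    exact (key_identity y hy N hN).symm
  · intro k
    have h1 : (0:ℝ) < (k:ℝ) + 1 := by positivity
    have h2 : (0:ℝ) < 1 + y / (k + 1) := by positivity
    have := Real.log_le_sub_one_of_pos h2
    simp only [g]
    linarith

lemma hasDerivAt_g (k : ℕ) (y : ℝ) (hy : 0 < y) : HasDerivAt (g k) (g' k y) y := by
  have h1 : (0:ℝ) < (k:ℝ) + 1 := by positivity
  have h2 : (0:ℝ) < 1 + y / (k + 1) := by positivity
  have hd1 : HasDerivAt (fun z : ℝ => z / (k + 1)) (1 / (k + 1)) y := by
    simpa using (hasDerivAt_id y).div_const ((k:ℝ) + 1)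
  have hd2 : HasDerivAt (fun z : ℝ => 1 + z / (k + 1)) (1 / (k + 1)) y := by
    simpa using hd1.const_add 1
  have hd3 : HasDerivAt (fun z : ℝ => log (1 + z / (k + 1)))
      ((1 / (k + 1)) / (1 + y / (k + 1))) y := hd2.log h2.ne'
  have heq : g' k y = 1 / (k + 1) - (1 / (k + 1)) / (1 + y / (k + 1)) := by
    rw [g']
    field_simp
    ring
  rw [heq]
  exact hd1.sub hd3

lemma bound (k : ℕ) (y : ℝ) (hy : y ∈ Set.Ioo (0:ℝ) 2) :
    ‖g' k y‖ ≤ 2 / ((k:ℝ) + 1) ^ 2 := by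
  obtain ⟨hy0, hy2⟩ := hy
  have h1 : (0:ℝ) < (k:ℝ) + 1 := by positivity
  rw [g', Real.norm_eq_abs, abs_of_nonneg (by positivity)]
  rw [div_le_div_iff₀ (by positivity) (by positivity)]
  have : ((k:ℝ) + 1) ^ 2 ≤ ((k:ℝ) + 1) * ((k + 1 : ℝ) + y) := by nlinarith
  nlinarith

lemma summable_u : Summable (fun k : ℕ => 2 / ((k:ℝ) + 1) ^ 2) := by
  have : Summable (fun k : ℕ => 1 / ((k:ℝ)) ^ 2) :=
    summable_one_div_nat_pow.mpr one_lt_two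
  have h2 := (summable_nat_add_iff 1).mpr this
  simpa [div_eq_mul_inv, mul_comm] using h2.mul_left 2
  
end DigammaAux

open DigammaAux in
/-- For `0 < x ≤ 1`, `Σ_{m=1}^∞ x/(m(m+x)) = ψ(x) + 1/x + γ`, where
`ψ = Γ'/Γ` is the digamma function and `γ` the Euler–Mascheroni constant. -/
theorem tsum_x_div_m_mul_m_add_x (x : ℝ) (hx0 : 0 < x) (hx1 : x ≤ 1) :
    ∑' m : ℕ, x / ((m + 1 : ℝ) * ((m + 1 : ℝ) + x))
      = deriv Real.Gamma x / Real.Gamma x + 1 / x + Real.eulerMascheroniConstant := by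
  have hxI : x ∈ Set.Ioo (0:ℝ) 2 := ⟨hx0, by linarith⟩
  -- differentiate the series termwise
  have hder : HasDerivAt (fun z => ∑' k, g k z) (∑' k, g' k x) x := by
    refine hasDerivAt_tsum_of_isPreconnected summable_u isOpen_Ioo
      (convex_Ioo _ _).isPreconnected (fun k y hy => hasDerivAt_g k y hy.1)
      (fun k y hy => bound k y hy) hxI ((hasSum_g x hx0).summable) hxI
  -- the series equals the explicit function on a neighbourhood of x
  have heq : (fun z => ∑' k, g k z) =ᶠ[𝓝 x]
      (fun z => z * Real.eulerMascheroniConstant + log z + log (Real.Gamma z)) := by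
    filter_upwards [Ioo_mem_nhds hxI.1 hxI.2] with z hz
    exact (hasSum_g z hz.1).tsum_eq
  have hder2 : HasDerivAt
      (fun z => z * Real.eulerMascheroniConstant + log z + log (Real.Gamma z))
      (∑' k, g' k x) x := hder.congr_of_eventuallyEq heq.symm
  -- direct computation of the derivative of that function
  have hGpos := Real.Gamma_pos_of_pos hx0
  have hGdiff : DifferentiableAt ℝ Real.Gamma x := by
    refine Real.differentiableAt_Gamma (fun m => ?_)
    have : (0:ℝ) ≤ m := m.cast_nonneg
    intro h
    rw [h] at hx0
    linarith
  have hder3 : HasDerivAt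
      (fun z => z * Real.eulerMascheroniConstant + log z + log (Real.Gamma z))
      (Real.eulerMascheroniConstant + 1 / x + deriv Real.Gamma x / Real.Gamma x) x := by
    have ha : HasDerivAt (fun z : ℝ => z * Real.eulerMascheroniConstant)
        Real.eulerMascheroniConstant x := hasDerivAt_mul_const _
    have hb : HasDerivAt log (1 / x) x := by
      simpa [one_div] using Real.hasDerivAt_log hx0.ne'
    have hc : HasDerivAt (fun z => log (Real.Gamma z))
        (deriv Real.Gamma x / Real.Gamma x) x :=
      (hGdiff.hasDerivAt).log hGpos.ne'
    exact (ha.add hb).add hc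
  have huniq : ∑' k, g' k x
      = Real.eulerMascheroniConstant + 1 / x + deriv Real.Gamma x / Real.Gamma x :=
    hder2.unique hder3
  have : ∑' m : ℕ, x / ((m + 1 : ℝ) * ((m + 1 : ℝ) + x)) = ∑' k, g' k x := by
    apply tsum_congr; intro k; rfl
  rw [this, huniq]
  ring
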